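/- Let A be a real m×n matrix such that A·Aᵀ is invertible, and set Ã = (A·Aᵀ)⁻¹. Let x, p ∈ ℝⁿ, b = A·x, and assume the scalar D = ⟪p, p⟫ - ⟪A·p, Ã·(A·p)⟫ is nonzero. Define α = (⟪x, p⟫ - ⟪A·p, Ã·b⟫)/D, u = Ã·(b - α·(A·p)) ∈ ℝᵐ, and q = α·p + Aᵀ·u. Then A·(x - q) = 0 and ⟪x - q, p⟫ = 0; consequently q is the orthogonal projection of x onto the subspace of ℝⁿ spanned by p together with the rows of A. -/

import Mathlib

open scoped RealInnerProductSpace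
open Matrix

/-- the vector `q = α p + Aᵀ u` built in the accumulated projection
step satisfies `A (x - q) = 0` and `⟪x - q, p⟫ = 0`; consequently `q` is the
orthogonal projection of `x` onto `span{p} ⊔ ran(Aᵀ)`. -/
theorem ap_step_is_projection {m n : ℕ}
    (A : Matrix (Fin m) (Fin n) ℝ) (hinv : IsUnit (A * Aᵀ))
    (Atil : Matrix (Fin m) (Fin m) ℝ) (hAtil : Atil = (A * Aᵀ)⁻¹)
    (x p : EuclideanSpace ℝ (Fin n))
    (b : EuclideanSpace ℝ (Fin m)) (hb : b = A.mulVec x)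
    (Ap : EuclideanSpace ℝ (Fin m)) (hAp : Ap = A.mulVec p)
    (D : ℝ) (hD : D = ⟪p, p⟫ - ⟪Ap, (WithLp.toLp 2 (Atil.mulVec Ap) : EuclideanSpace ℝ (Fin m))⟫)
    (hDne : D ≠ 0)
    (α : ℝ) (hα : α = (⟪x, p⟫ - ⟪Ap, (WithLp.toLp 2 (Atil.mulVec b) : EuclideanSpace ℝ (Fin m))⟫) / D)
    (u : EuclideanSpace ℝ (Fin m)) (hu : u = Atil.mulVec (b - α • Ap))
    (Atu : EuclideanSpace ℝ (Fin n)) (hAtu : Atu = Aᵀ.mulVec u)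
    (q : EuclideanSpace ℝ (Fin n)) (hq : q = α • p + Atu) :
    A.mulVec (x - q) = 0 ∧ ⟪x - q, p⟫ = 0 ∧
      (q ∈ Submodule.span ℝ {p} ⊔
          Submodule.span ℝ (Set.range fun i : Fin m => (WithLp.toLp 2 (A i) : EuclideanSpace ℝ (Fin n))) ∧
        ∀ w ∈ Submodule.span ℝ {p} ⊔
            Submodule.span ℝ (Set.range fun i : Fin m => (WithLp.toLp 2 (A i) : EuclideanSpace ℝ (Fin n))),
          ⟪x - q, w⟫ = 0) := by
  have inner_eq : ∀ (k : ℕ) (v w : EuclideanSpace ℝ (Fin k)),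
      ⟪v, w⟫ = (v : Fin k → ℝ) ⬝ᵥ w := by
    intro k v w
    simp [PiLp.inner_apply, dotProduct, RCLike.inner_apply, mul_comm]
  have hAAtil : (A * Aᵀ) * Atil = 1 := by
    rw [hAtil]
    exact Matrix.mul_nonsing_inv _ ((Matrix.isUnit_iff_isUnit_det _).mp hinv)
  have hsubfun : ∀ (k : ℕ) (v w : EuclideanSpace ℝ (Fin k)),
      ((v - w : EuclideanSpace ℝ (Fin k)) : Fin k → ℝ) = (v : Fin k → ℝ) - w := by
    intro k v w; funext i; simp
  have haddfun : ∀ (k : ℕ) (v w : EuclideanSpace ℝ (Fin k)),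
      ((v + w : EuclideanSpace ℝ (Fin k)) : Fin k → ℝ) = (v : Fin k → ℝ) + w := by
    intro k v w; funext i; simp
  have hsmulfun : ∀ (k : ℕ) (c : ℝ) (v : EuclideanSpace ℝ (Fin k)),
      ((c • v : EuclideanSpace ℝ (Fin k)) : Fin k → ℝ) = c • (v : Fin k → ℝ) := by
    intro k c v; funext i; simp
  -- Step 1: A q = b
  have hAq : A.mulVec (q : Fin n → ℝ) = b := by
    rw [hq, haddfun, hsmulfun, hAtu, hu, Matrix.mulVec_add, Matrix.mulVec_smul,
      Matrix.mulVec_mulVec, Matrix.mulVec_mulVec, hAAtil, Matrix.one_mulVec, hAp]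
    abel
  have hAxq : A.mulVec (x - q) = 0 := by
    rw [Matrix.mulVec_sub, hAq, ← hb, sub_self]
  -- Step 2: ⟪x - q, p⟫ = 0
  have hDdot : D = (p : Fin n → ℝ) ⬝ᵥ p - (Ap : Fin m → ℝ) ⬝ᵥ Atil.mulVec Ap := by
    rw [hD, inner_eq, inner_eq]
  have hkey : α * D = (x : Fin n → ℝ) ⬝ᵥ p - (Ap : Fin m → ℝ) ⬝ᵥ Atil.mulVec b := by
    rw [hα, inner_eq, inner_eq]; field_simp
  have hs1 : (Aᵀ.mulVec (u : Fin m → ℝ)) ⬝ᵥ (p : Fin n → ℝ)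
      = (u : Fin m → ℝ) ⬝ᵥ (Ap : Fin m → ℝ) := by
    rw [Matrix.mulVec_transpose, ← Matrix.dotProduct_mulVec, hAp]
  have hs2 : (u : Fin m → ℝ) ⬝ᵥ (Ap : Fin m → ℝ)
      = (Ap : Fin m → ℝ) ⬝ᵥ Atil.mulVec b - α * ((Ap : Fin m → ℝ) ⬝ᵥ Atil.mulVec Ap) := by
    rw [hu, dotProduct_comm, Matrix.mulVec_sub, Matrix.mulVec_smul,
      dotProduct_sub, dotProduct_smul, smul_eq_mul]
  have hinnerp : ⟪x - q, p⟫ = 0 := by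
    rw [inner_eq, hsubfun, sub_dotProduct, hq, haddfun, add_dotProduct,
      hsmulfun, smul_dotProduct, hAtu, hs1, hs2]
    simp only [smul_eq_mul]
    linear_combination α * hDdot - hkey
  refine ⟨hAxq, hinnerp, ?_, ?_⟩
  · -- membership
    have hAtusum : Atu = ∑ i, u i • (WithLp.toLp 2 (A i) : EuclideanSpace ℝ (Fin n)) := by
      ext j; rw [hAtu]
      simp [Matrix.mulVec, dotProduct, Matrix.transpose_apply, Finset.sum_apply, mul_comm,
        PiLp.smul_apply, smul_eq_mul]
    rw [hq]
    refine Submodule.add_mem _ (Submodule.mem_sup_left ?_) (Submodule.mem_sup_right ?_)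
    · exact Submodule.smul_mem _ _ (Submodule.subset_span rfl)
    · rw [hAtusum]
      exact Submodule.sum_mem _ fun i _ =>
        Submodule.smul_mem _ _ (Submodule.subset_span ⟨i, rfl⟩)
  · -- orthogonality
    have hrow : ∀ i : Fin m, ⟪x - q, (WithLp.toLp 2 (A i) : EuclideanSpace ℝ (Fin n))⟫ = 0 := by
      intro i
      rw [inner_eq, dotProduct_comm]
      exact congrFun hAxq i
    have hz0 : ∀ z ∈ Submodule.span ℝ
        (Set.range fun i : Fin m => (WithLp.toLp 2 (A i) : EuclideanSpace ℝ (Fin n))), ⟪x - q, z⟫ = 0 := by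
      intro z hz
      induction hz using Submodule.span_induction with
      | mem v hv => obtain ⟨i, rfl⟩ := hv; exact hrow i
      | zero => simp
      | add v₁ v₂ _ _ h1 h2 => rw [inner_add_right, h1, h2, add_zero]
      | smul c v _ h => rw [inner_smul_right, h, mul_zero]
    intro w hw
    obtain ⟨y, hy, z, hz, rfl⟩ := Submodule.mem_sup.mp hw
    obtain ⟨c, rfl⟩ := Submodule.mem_span_singleton.mp hy
    rw [inner_add_right, inner_smul_right, hinnerp, hz0 z hz, mul_zero, add_zero]
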